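/- The 4×4 matrix J = [[0,0,-p x₁, -p β x₁],[0, f₂ − p r₂, 0, 0],[0, 0, b/α − b, 0],[c, c, −b/α, −b]] (with x₁ = b f₁/(c β), r₂ = f₁/β) has eigenvalue b/α − b > 0, so the symmetric two-node network's fixed point with local immunodeficiency is linearly unstable. -/

import Mathlib

open Matrix

theorem stmt_2 (b c p α β f₁ f₂ : ℝ)
    (hb : 0 < b) (hc : 0 < c) (hp : 0 < p)
    (hβ : 0 < β) (hβα : β < α) (hα1 : α < 1)
    (hf₁ : 0 < f₁) :
    let x₁ : ℝ := b * f₁ / (c * β)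
    let r₂ : ℝ := f₁ / β
    let J : Matrix (Fin 4) (Fin 4) ℝ :=
      !![0, 0, -p * x₁, -p * β * x₁;
         0, f₂ - p * r₂, 0, 0;
         0, 0, b / α - b, 0;
         c, c, -b / α, -b]
    (∃ v : Fin 4 → ℝ, v ≠ 0 ∧ J.mulVec v = (b / α - b) • v) ∧ 0 < b / α - b := by
  intro x₁ r₂ J
  have hα : 0 < α := hβ.trans hβα
  have hlam : 0 < b / α - b := by
    have : b < b / α := by
      rw [lt_div_iff₀ hα]; nlinarith
    linarith
  refine ⟨?_, hlam⟩
  have hD : 0 < (b / α - b) + p * f₁ * α := by positivity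
  set D : ℝ := (b / α - b) + p * f₁ * α with hDdef
  set v0 : ℝ := -p * x₁ * (1 - β) / D with hv0
  set v3 : ℝ := c * α * v0 / b - 1 with hv3
  refine ⟨![v0, 0, 1, v3], ?_, ?_⟩
  · intro h
    have := congrFun h 2
    simp at this
  · funext i
    have hcβ : c * β ≠ 0 := by positivity
    have hx₁ : x₁ = b * f₁ / (c * β) := rfl
    fin_cases i <;>
      simp [J, mulVec, dotProduct, Fin.sum_univ_succ, hv3, hv0, hx₁] <;>
      field_simp <;> ring_nf <;>
      field_simp [hDdef] <;> rw [hDdef] <;> field_simp <;> ring
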